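/- Let H : Mₙ(ℂ) → ℝ be differentiable (as a function on Mₙ(ℂ) regarded as a real vector space with the Frobenius inner product ⟨A,B⟩ = Re trace(AᴴB)), and let G : Mₙ(ℂ) → Mₙ(ℂ) be its gradient, i.e. the derivative of H at W in direction X equals Re trace(G(W)ᴴ X) for all W, X ∈ Mₙ(ℂ). If W : ℝ → Mₙ(ℂ) is a differentiable curve satisfying W'(t) = [G(W(t))ᴴ, W(t)] for all t, then t ↦ H(W(t)) is constant; that is, the Hamiltonian is an invariant of the isospectral flow with B(W) = G(W)ᴴ. -/

import Mathlib

open Matrix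

attribute [local instance] Matrix.frobeniusNormedAddCommGroup Matrix.frobeniusNormedSpace

/-- If `H : Mₙ(ℂ) → ℝ` is differentiable with gradient `G` with respect to the real
Frobenius inner product `⟨A, X⟩ = Re trace(AᴴX)`, then `H` is constant along any
solution of the isospectral flow `W' = [G(W)ᴴ, W]`. -/
theorem stmt_12 (n : ℕ) (H : Matrix (Fin n) (Fin n) ℂ → ℝ)
    (G : Matrix (Fin n) (Fin n) ℂ → Matrix (Fin n) (Fin n) ℂ)
    (f : Matrix (Fin n) (Fin n) ℂ → (Matrix (Fin n) (Fin n) ℂ →L[ℝ] ℝ))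
    (hH : ∀ A : Matrix (Fin n) (Fin n) ℂ, HasFDerivAt H (f A) A)
    (hf : ∀ A X : Matrix (Fin n) (Fin n) ℂ, f A X = (((G A)ᴴ * X).trace).re)
    (W : ℝ → Matrix (Fin n) (Fin n) ℂ)
    (hW : ∀ t : ℝ, HasDerivAt W ((G (W t))ᴴ * W t - W t * (G (W t))ᴴ) t) :
    ∀ t : ℝ, H (W t) = H (W 0) := by
  have key : ∀ t : ℝ, HasDerivAt (fun t => H (W t)) 0 t := by
    intro t
    have h1 := (hH (W t)).comp_hasDerivAt t (hW t)
    refine h1.congr_deriv ?_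
    refine (hf _ _).trans ?_
    set A := (G (W t))ᴴ
    have : (A * (A * W t - W t * A)).trace = 0 := by
      rw [Matrix.mul_sub, Matrix.trace_sub, ← Matrix.mul_assoc, ← Matrix.mul_assoc,
        Matrix.trace_mul_comm (A * W t) A, Matrix.mul_assoc, ← Matrix.mul_assoc, sub_self]
    rw [this]
    simp
  intro t
  exact is_const_of_deriv_eq_zero (fun s => (key s).differentiableAt)
    (fun s => (key s).deriv) t 0
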